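/- The inverse Mills ratio λ(α) = φ(α)/(1 − Φ(α)) is strictly increasing on ℝ. -/

import Mathlib

open MeasureTheory Set

/-- standard normal density -/
noncomputable def phi (x : ℝ) : ℝ := (Real.sqrt (2 * Real.pi))⁻¹ * Real.exp (-x ^ 2 / 2)

/-- standard normal CDF -/
noncomputable def Phi (x : ℝ) : ℝ := ∫ u in Iio x, phi u

lemma phi_pos (x : ℝ) : 0 < phi x := by
  have h2π : (0:ℝ) < 2 * Real.pi := by positivity
  exact mul_pos (inv_pos.2 (Real.sqrt_pos.2 h2π)) (Real.exp_pos _)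

lemma phi_cont : Continuous phi := by
  unfold phi; fun_prop

lemma phi_integrable : Integrable phi := by
  have h : Integrable (fun x : ℝ => Real.exp (-(1/2) * x ^ 2)) :=
    integrable_exp_neg_mul_sq (by norm_num)
  have := h.const_mul (Real.sqrt (2 * Real.pi))⁻¹
  refine this.congr (Filter.Eventually.of_forall fun x => ?_)
  unfold phi; ring_nf

lemma integral_phi : ∫ x, phi x = 1 := by
  have h : ∫ x : ℝ, Real.exp (-(1/2) * x ^ 2) = Real.sqrt (Real.pi / (1/2)) :=
    integral_gaussian (1/2)
  have heq : ∀ x : ℝ, phi x = (Real.sqrt (2 * Real.pi))⁻¹ * Real.exp (-(1/2) * x ^ 2) := by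
    intro x; unfold phi; ring_nf
  have hπ : Real.pi / (1/2) = 2 * Real.pi := by ring
  rw [show (fun x => phi x) = fun x => (Real.sqrt (2 * Real.pi))⁻¹ * Real.exp (-(1/2) * x ^ 2)
    from funext heq, integral_const_mul, h, hπ]
  rw [inv_mul_cancel₀]
  positivity

lemma hasDerivAt_phi (x : ℝ) : HasDerivAt phi (-x * phi x) x := by
  have h1 : HasDerivAt (fun x : ℝ => -x ^ 2 / 2) (-x) x := by
    have := ((hasDerivAt_pow 2 x).neg).div_const 2
    refine this.congr_deriv ?_
    simp; ring
  have h2 := (h1.exp).const_mul (Real.sqrt (2 * Real.pi))⁻¹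
  refine h2.congr_deriv ?_
  unfold phi; ring

lemma Phi_eq_Iic (x : ℝ) : Phi x = ∫ u in Iic x, phi u :=
  setIntegral_congr_set Iio_ae_eq_Iic

lemma hasDerivAt_Phi (x : ℝ) : HasDerivAt Phi (phi x) x := by
  have key : Phi = fun y => Phi 0 + ∫ t in (0:ℝ)..y, phi t := by
    funext y
    have h := intervalIntegral.integral_Iic_sub_Iic (μ := volume) (f := phi) (a := (0:ℝ))
      (b := y) phi_integrable.integrableOn phi_integrable.integrableOn
    rw [Phi_eq_Iic, Phi_eq_Iic]
    linarith
  rw [key]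
  have h := intervalIntegral.integral_hasDerivAt_right
    (phi_integrable.intervalIntegrable)
    (phi_cont.stronglyMeasurableAtFilter _ _)
    phi_cont.continuousAt (a := 0) (b := x)
  simpa using (h.const_add (Phi 0))

lemma one_sub_Phi (x : ℝ) : 1 - Phi x = ∫ u in Ioi x, phi u := by
  rw [Phi_eq_Iic, ← integral_phi,
    ← intervalIntegral.integral_Iic_add_Ioi (f := phi) phi_integrable.integrableOn
      phi_integrable.integrableOn]
  ring

lemma one_sub_Phi_pos (x : ℝ) : 0 < 1 - Phi x := by
  rw [one_sub_Phi]
  rw [setIntegral_pos_iff_support_of_nonneg_ae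
    (Filter.Eventually.of_forall fun u => (phi_pos u).le) phi_integrable.integrableOn]
  have : Function.support phi = univ := by
    ext u; simp [Function.mem_support, (phi_pos u).ne']
  rw [this, univ_inter]
  simp [Measure.measure_Ioi_pos]

lemma tendsto_phi_atTop : Filter.Tendsto phi Filter.atTop (nhds 0) := by
  have h1 : Filter.Tendsto (fun x : ℝ => -x ^ 2 / 2) Filter.atTop Filter.atBot := by
    apply Filter.Tendsto.atBot_div_const (by norm_num)
    exact Filter.tendsto_neg_atTop_atBot.comp (Filter.tendsto_pow_atTop (by norm_num : 2 ≠ 0))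
  have h2 := (Real.tendsto_exp_atBot.comp h1).const_mul (Real.sqrt (2 * Real.pi))⁻¹
  have : phi = fun x => (Real.sqrt (2 * Real.pi))⁻¹ * Real.exp (-x ^ 2 / 2) := rfl
  rw [this]
  simpa [Function.comp] using h2

lemma mills_key (x : ℝ) : x * (1 - Phi x) < phi x := by
  rcases le_or_gt x 0 with hx | hx
  · calc x * (1 - Phi x) ≤ 0 := mul_nonpos_of_nonpos_of_nonneg hx (one_sub_Phi_pos x).le
      _ < phi x := phi_pos x
  · -- ∫ u in Ioi x, u * phi u = phi x
    have hId : ∫ u in Ioi x, u * phi u = phi x := by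
      have := integral_Ioi_of_hasDerivAt_of_nonneg' (a := x) (g := fun u => -phi u)
        (g' := fun u => u * phi u) (l := 0)
        (fun u _ => ((hasDerivAt_phi u).neg).congr_deriv (by ring))
        (fun u hu => mul_nonneg (hx.trans hu).le (phi_pos u).le)
        (by simpa using tendsto_phi_atTop.neg)
      simpa using this
    have hint : IntegrableOn (fun u => u * phi u) (Ioi x) := by
      rw [← hId] at *
      exact integrableOn_Ioi_deriv_of_nonneg' (g := fun u => -phi u)
        (fun u _ => ((hasDerivAt_phi u).neg).congr_deriv (by ring))
        (fun u hu => mul_nonneg (hx.trans hu).le (phi_pos u).le)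
        (by simpa using tendsto_phi_atTop.neg)
    have hdiff : 0 < ∫ u in Ioi x, (u - x) * phi u := by
      rw [setIntegral_pos_iff_support_of_nonneg_ae]
      · have hsub : Ioi x ⊆ Function.support (fun u => (u - x) * phi u) ∩ Ioi x := by
          intro u hu
          refine ⟨?_, hu⟩
          simp only [Function.mem_support]
          exact mul_ne_zero (sub_ne_zero.2 (ne_of_gt hu)) (phi_pos u).ne'
        calc (0:ENNReal) < volume (Ioi x) := by simp [Measure.measure_Ioi_pos]
          _ ≤ _ := measure_mono hsub
      · filter_upwards [ae_restrict_mem measurableSet_Ioi] with u hu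
        exact mul_nonneg (sub_nonneg.2 (le_of_lt hu)) (phi_pos u).le
      · exact (hint.sub (phi_integrable.integrableOn.const_mul x)).congr
          (Filter.Eventually.of_forall fun u => by simp only [Pi.sub_apply]; ring)
    have hsplit : ∫ u in Ioi x, (u - x) * phi u
        = (∫ u in Ioi x, u * phi u) - x * ∫ u in Ioi x, phi u := by
      rw [← integral_const_mul, ← integral_sub hint
        ((phi_integrable.integrableOn.const_mul x))]
      congr 1; funext u; ring
    rw [hsplit, hId, ← one_sub_Phi] at hdiff
    linarith

/-- The inverse Mills ratio `λ(α) = φ(α)/(1 − Φ(α))` is strictly increasing on `ℝ`. -/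
theorem inverseMillsRatio_strictMono :
    StrictMono (fun α : ℝ => phi α / (1 - Phi α)) := by
  apply strictMono_of_hasDerivAt_pos
    (f' := fun x => (-x * phi x * (1 - Phi x) - phi x * (-phi x)) / (1 - Phi x) ^ 2)
  · intro x
    exact (hasDerivAt_phi x).div ((hasDerivAt_Phi x).const_sub 1) (one_sub_Phi_pos x).ne'
  · intro x
    have h1 := one_sub_Phi_pos x
    have h2 := phi_pos x
    have h3 := mills_key x
    have : -x * phi x * (1 - Phi x) - phi x * (-phi x)
        = phi x * (phi x - x * (1 - Phi x)) := by ring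
    have h4 : 0 < phi x - x * (1 - Phi x) := by linarith
    rw [this]
    positivity
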